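/- Let p > 0, suppose c ≠ 0, and let n₀ be the smallest index n with c_n ≠ 0. Define v(t) = Σ_{n≥1} exp(−λ_n t + ∫_0^t α(r(s)) ds) c_n e_n, ξ(t) = exp((p(p−1)/2) ∫_0^t β(r(s))² ds), and g(i) = p α_i + (p(p−1)/2) β_i² for i ∈ S. Then for every t ≥ 0, |c_{n₀}|^p · exp(−p λ_{n₀} t + ∫_0^t g(r(s)) ds) ≤ ‖v(t)‖^p · ξ(t) ≤ ‖c‖^p · exp(−p λ_{n₀} t + ∫_0^t g(r(s)) ds). -/

import Mathlib

open MeasureTheory in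
lemma aux_intervalIntegrable {N : ℕ} (r : ℝ → Fin N) (hr : Measurable r)
    (φ : Fin N → ℝ) (t : ℝ) :
    IntervalIntegrable (fun s => φ (r s)) MeasureTheory.volume 0 t := by
  rw [intervalIntegrable_iff]
  refine Integrable.mono' (g := fun _ => ∑ i : Fin N, |φ i|)
    ((integrableOn_const_iff (C := ∑ i : Fin N, |φ i|)).mpr (Or.inr ?_))
    (((measurable_of_countable φ).comp hr).aestronglyMeasurable) (Filter.Eventually.of_forall ?_)
  · exact measure_Ioc_lt_top
  · intro s
    simpa using Finset.single_le_sum (f := fun i => |φ i|) (fun i _ => abs_nonneg _)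
      (Finset.mem_univ (r s))


open Filter
open scoped BigOperators

/-- pathwise two-sided bound for `‖v(t)‖^p ξ(t)`: with
`g(i) = p α_i + (p(p−1)/2) β_i²`,
`|c_{n₀}|^p exp(−pλ_{n₀}t + ∫_0^t g(r(s))ds) ≤ ‖v(t)‖^p ξ(t) ≤ ‖c‖^p exp(−pλ_{n₀}t + ∫_0^t g(r(s))ds)`. -/
theorem pth_moment_pathwise_bound
    {H : Type*} [NormedAddCommGroup H] [InnerProductSpace ℝ H] [CompleteSpace H]
    (b : HilbertBasis ℕ ℝ H)
    (lam : ℕ → ℝ) (hlam : Monotone lam)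
    (c : ℕ → ℝ) (hc : Summable (fun n => c n ^ 2)) (hc0 : c ≠ 0)
    (n₀ : ℕ) (hn₀ : c n₀ ≠ 0) (hn₀min : ∀ m, m < n₀ → c m = 0)
    {N : ℕ} (r : ℝ → Fin N) (hr : Measurable r)
    (α β : Fin N → ℝ)
    (p : ℝ) (hp : 0 < p)
    (v : ℝ → H)
    (hv : ∀ t : ℝ, v t =
      ∑' n : ℕ, (Real.exp (-lam n * t + ∫ s in (0:ℝ)..t, α (r s)) * c n) • (b n : H))
    (ξ : ℝ → ℝ)
    (hξ : ∀ t : ℝ, ξ t = Real.exp (p * (p - 1) / 2 * ∫ s in (0:ℝ)..t, β (r s) ^ 2)) :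
    ∀ t : ℝ, 0 ≤ t →
      |c n₀| ^ p *
          Real.exp (-(p * lam n₀) * t +
            ∫ s in (0:ℝ)..t, (p * α (r s) + p * (p - 1) / 2 * β (r s) ^ 2))
        ≤ ‖v t‖ ^ p * ξ t ∧
      ‖v t‖ ^ p * ξ t
        ≤ Real.sqrt (∑' n : ℕ, c n ^ 2) ^ p *
            Real.exp (-(p * lam n₀) * t +
              ∫ s in (0:ℝ)..t, (p * α (r s) + p * (p - 1) / 2 * β (r s) ^ 2)) := by
  intro t ht
  set A : ℝ := ∫ s in (0:ℝ)..t, α (r s) with hA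
  set B : ℝ := ∫ s in (0:ℝ)..t, β (r s) ^ 2 with hB
  set K : ℝ := p * (p - 1) / 2 with hK
  set S : ℝ := ∑' n : ℕ, c n ^ 2 with hS
  -- the integral in the statement splits
  have hInt : (∫ s in (0:ℝ)..t, (p * α (r s) + K * β (r s) ^ 2)) = p * A + K * B := by
    rw [intervalIntegral.integral_add
        ((aux_intervalIntegrable r hr α t).const_mul p)
        ((aux_intervalIntegrable r hr (fun i => β i ^ 2) t).const_mul K),
      intervalIntegral.integral_const_mul, intervalIntegral.integral_const_mul]
  set a : ℕ → ℝ := fun n => Real.exp (-lam n * t + A) * c n with ha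
  set E : ℝ := Real.exp (-lam n₀ * t + A) with hE
  have hEpos : 0 < E := Real.exp_pos _
  have hbound : ∀ n, a n ^ 2 ≤ E ^ 2 * c n ^ 2 := by
    intro n
    rcases lt_or_ge n n₀ with h | h
    · have hz : c n = 0 := hn₀min n h
      rw [ha]; simp [hz]
    · have h1 : Real.exp (-lam n * t + A) ≤ E := by
        apply Real.exp_le_exp.mpr
        have := mul_le_mul_of_nonneg_right (hlam h) ht
        linarith
      have h2 : 0 ≤ Real.exp (-lam n * t + A) := (Real.exp_pos _).le
      calc a n ^ 2 = Real.exp (-lam n * t + A) ^ 2 * c n ^ 2 := by ring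
        _ ≤ E ^ 2 * c n ^ 2 := by
            have := mul_le_mul h1 h1 h2 hEpos.le
            nlinarith [sq_nonneg (c n)]
  have hsum : Summable (fun n => a n ^ 2) :=
    Summable.of_nonneg_of_le (fun n => sq_nonneg _) hbound (hc.mul_left _)
  -- membership in ℓ²
  have hmem : Memℓp a 2 := by
    apply memℓp_gen
    have : (fun n => ‖a n‖ ^ (2 : ENNReal).toReal) = fun n => a n ^ 2 := by
      funext n
      rw [ENNReal.toReal_ofNat, Real.norm_eq_abs, Real.rpow_two, sq_abs]
    rw [this]
    exact hsum
  set f : lp (fun _ : ℕ => ℝ) 2 := ⟨a, hmem⟩ with hf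
  have hvf : v t = b.repr.symm f := by
    rw [hv t, ← hA]
    exact (b.hasSum_repr_symm f).tsum_eq
  have hnormv : ‖v t‖ ^ (2:ℕ) = ∑' n, a n ^ 2 := by
    have h1 : ‖v t‖ = ‖f‖ := by rw [hvf]; exact b.repr.symm.norm_map f
    have h2 := lp.norm_rpow_eq_tsum (p := 2) (by norm_num) f
    rw [h1]
    have h3 : ‖f‖ ^ (2 : ENNReal).toReal = ‖f‖ ^ (2:ℕ) := by
      rw [ENNReal.toReal_ofNat, Real.rpow_two]
    rw [← h3, h2]
    congr 1
    funext n
    rw [ENNReal.toReal_ofNat, Real.rpow_two]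
    show ‖a n‖ ^ 2 = _
    rw [Real.norm_eq_abs, sq_abs]
  -- two-sided bounds on ‖v t‖
  have hlow : E * |c n₀| ≤ ‖v t‖ := by
    have h1 : a n₀ ^ 2 ≤ ∑' n, a n ^ 2 := Summable.le_tsum hsum n₀ (fun m _ => sq_nonneg _)
    have h2 : E * |c n₀| = |a n₀| := by
      rw [ha, hE]; simp only [abs_mul, abs_of_pos (Real.exp_pos _)]
    rw [h2]
    have h1' : a n₀ ^ 2 ≤ ‖v t‖ ^ 2 := by rw [hnormv]; exact h1
    have h3 := Real.sqrt_le_sqrt h1'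
    rwa [Real.sqrt_sq_eq_abs, Real.sqrt_sq (norm_nonneg _)] at h3
  have hSnn : 0 ≤ S := tsum_nonneg (fun n => sq_nonneg _)
  have hhigh : ‖v t‖ ≤ E * Real.sqrt S := by
    have h1 : (∑' n, a n ^ 2) ≤ E ^ 2 * S := by
      calc (∑' n, a n ^ 2) ≤ ∑' n, E ^ 2 * c n ^ 2 :=
            Summable.tsum_le_tsum hbound hsum (hc.mul_left _)
        _ = E ^ 2 * S := tsum_mul_left
    have h1' : ‖v t‖ ^ 2 ≤ E ^ 2 * S := by rw [hnormv]; exact h1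
    have h2 := Real.sqrt_le_sqrt h1'
    rwa [Real.sqrt_sq (norm_nonneg _), Real.sqrt_mul (sq_nonneg E), Real.sqrt_sq hEpos.le] at h2
  -- pass to p-th powers
  have hξt : ξ t = Real.exp (K * B) := by rw [hξ t]
  have hξpos : 0 < ξ t := by rw [hξt]; exact Real.exp_pos _
  have hrpow_low : (E * |c n₀|) ^ p ≤ ‖v t‖ ^ p :=
    Real.rpow_le_rpow (by positivity) hlow hp.le
  have hrpow_high : ‖v t‖ ^ p ≤ (E * Real.sqrt S) ^ p :=
    Real.rpow_le_rpow (norm_nonneg _) hhigh hp.le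
  have hEp : E ^ p = Real.exp ((-lam n₀ * t + A) * p) := (Real.exp_mul _ p).symm
  have hexp_eq : E ^ p * ξ t =
      Real.exp (-(p * lam n₀) * t + (p * A + K * B)) := by
    rw [hEp, hξt, ← Real.exp_add]
    ring_nf
  rw [hInt]
  constructor
  · calc |c n₀| ^ p * Real.exp (-(p * lam n₀) * t + (p * A + K * B))
        = (E * |c n₀|) ^ p * ξ t := by
          rw [Real.mul_rpow hEpos.le (abs_nonneg _), ← hexp_eq]; ring
      _ ≤ ‖v t‖ ^ p * ξ t := by
          exact mul_le_mul_of_nonneg_right hrpow_low hξpos.le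
  · calc ‖v t‖ ^ p * ξ t ≤ (E * Real.sqrt S) ^ p * ξ t :=
          mul_le_mul_of_nonneg_right hrpow_high hξpos.le
      _ = Real.sqrt S ^ p * Real.exp (-(p * lam n₀) * t + (p * A + K * B)) := by
          rw [Real.mul_rpow hEpos.le (Real.sqrt_nonneg _), ← hexp_eq]; ring
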